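/- Let ν, N ≥ 1 and let e₁,…,e_N ∈ [0,∞)^ν be dilation exponents such that for every μ ∈ {1,…,ν} there exists i with e_i^μ > 0. Let a > 0 and let {ς_j}_{j∈ℕ^ν} be a family of C¹ functions on ℝ^N, each supported in the ball B^N(a) = {t : |t| < a}, with sup_j ‖ς_j‖_{C¹} < ∞, and satisfying the cancellation condition: whenever j_μ ≠ 0, ∫ ς_j(t) dt^μ = 0 for every fixed choice of the remaining coordinates. Then there exists ε > 0, depending only on ν and e, such that for every compactly supported Lipschitz function f : ℝ^N → ℝ there is a constant C_f with |∫_{ℝ^N} ς_j^{(2^j)}(t) f(t) dt| ≤ C_f · 2^{−ε·max_μ j_μ} for all j ∈ ℕ^ν. In particular, the series ∑_{j∈ℕ^ν} ∫ ς_j^{(2^j)}(t) f(t) dt converges absolutely. -/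

import Mathlib

open MeasureTheory

/-- The `ν`-parameter dilate `η^{(2^j)}(t) = 2^{j·e₁+⋯+j·e_N} η(2^{j·e₁}t₁,…,2^{j·e_N}t_N)`
of a function on ℝ^N, for dilation exponents `e` and `j ∈ ℝ^ν`. -/
noncomputable def dilate {ν N : ℕ} (e : Fin N → Fin ν → ℝ) (η : (Fin N → ℝ) → ℝ)
    (j : Fin ν → ℝ) : (Fin N → ℝ) → ℝ :=
  fun t => (2 : ℝ) ^ (∑ i, ∑ μ, j μ * e i μ) *
    η (fun i => (2 : ℝ) ^ (∑ μ, j μ * e i μ) * t i)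


lemma aux_summable_pi (n : ℕ) {r : ℝ} (h0 : 0 ≤ r) (h1 : r < 1) :
    Summable (fun j : Fin n → ℕ => ∏ μ, r ^ j μ) := by
  induction n with
  | zero =>
    exact summable_of_finite_support (Set.Finite.subset (Set.finite_univ) (Set.subset_univ _))
  | succ n ih =>
    have hgeo : Summable (fun k : ℕ => r ^ k) := summable_geometric_of_lt_one h0 h1
    have h := hgeo.mul_of_nonneg ih (fun k => pow_nonneg h0 k)
      (fun j => Finset.prod_nonneg fun μ _ => pow_nonneg h0 _)
    have h2 := (Equiv.summable_iff (Fin.consEquiv (fun _ => ℕ)).symm).mpr h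
    refine h2.congr ?_
    intro j
    simp [Fin.consEquiv, Fin.prod_univ_succ, Function.comp, Fin.tail]

lemma aux_cov {N : ℕ} (η : (Fin N → ℝ) → ℝ) (hη : Continuous η)
    (hsupp : HasCompactSupport η) (f : (Fin N → ℝ) → ℝ) (hf : Continuous f)
    (c : Fin N → ℝ) :
    (∫ t, ((2:ℝ) ^ (∑ i, c i)) * η (fun i => (2:ℝ) ^ (c i) * t i) * f t)
      = ∫ s, η s * f (fun i => (2:ℝ) ^ (-(c i)) * s i) := by
  classical
  set d : Fin N → ℝ := fun i => (2:ℝ) ^ (c i) with hd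
  have hdpos : ∀ i, 0 < d i := fun i => Real.rpow_pos_of_pos two_pos _
  have hprodpos : 0 < ∏ i, d i := Finset.prod_pos (fun i _ => hdpos i)
  set L : (Fin N → ℝ) →ₗ[ℝ] (Fin N → ℝ) := Matrix.toLin' (Matrix.diagonal d) with hLdef
  have hLapp : ∀ v i, L v i = d i * v i := by
    intro v i
    simp [hLdef, Matrix.toLin'_apply, Matrix.mulVec_diagonal]
  have hdet : LinearMap.det L = ∏ i, d i := by
    rw [hLdef, LinearMap.det_toLin', Matrix.det_diagonal]
  have hdetne : LinearMap.det L ≠ 0 := by rw [hdet]; exact ne_of_gt hprodpos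
  have hmap : Measure.map (⇑L) volume = ENNReal.ofReal |(LinearMap.det L)⁻¹| • volume :=
    Measure.map_linearMap_addHaar_eq_smul_addHaar volume hdetne
  set h₀ : (Fin N → ℝ) → ℝ := fun s => η s * f (fun i => (2:ℝ) ^ (-(c i)) * s i) with hh0
  have hTcont : Continuous (fun (s : Fin N → ℝ) => fun i => (2:ℝ) ^ (-(c i)) * s i) :=
    continuous_pi fun i => continuous_const.mul (continuous_apply i)
  have hh0cont : Continuous h₀ := hη.mul (hf.comp hTcont)
  have hLcont : Continuous (⇑L) := L.continuous_of_finiteDimensional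
  have hcs : HasCompactSupport h₀ := hsupp.mul_right
  have step1 : (∫ t, ((2:ℝ) ^ (∑ i, c i)) * η (fun i => (2:ℝ) ^ (c i) * t i) * f t)
      = ∫ t, (∏ i, d i) * h₀ (L t) := by
    refine integral_congr_ae (Filter.Eventually.of_forall fun t => ?_)
    have h1 : (fun i => (2:ℝ) ^ (-(c i)) * (L t i)) = t := by
      funext i
      rw [hLapp, hd, ← mul_assoc, ← Real.rpow_add two_pos]
      simp
    have h2 : (fun i => (2:ℝ) ^ (c i) * t i) = L t := by
      funext i; rw [hLapp]
    have h3 : ((2:ℝ) ^ (∑ i, c i)) = ∏ i, d i :=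
      Real.rpow_sum_of_pos two_pos c Finset.univ
    rw [hh0]
    simp only [h1, h2, h3]
    ring
  rw [step1, integral_const_mul]
  have hmapint : (∫ t, h₀ (L t)) = ∫ s, h₀ s ∂(Measure.map (⇑L) volume) :=
    (integral_map hLcont.aemeasurable hh0cont.aestronglyMeasurable).symm
  rw [hmapint, hmap, integral_smul_measure, hdet]
  have habs : |(∏ i, d i)⁻¹| = (∏ i, d i)⁻¹ := abs_of_pos (inv_pos.mpr hprodpos)
  rw [ENNReal.toReal_ofReal (by positivity), habs, smul_eq_mul, ← mul_assoc,
    mul_inv_cancel₀ (ne_of_gt hprodpos), one_mul]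


lemma aux_cancel {N : ℕ} (p : Fin N → Prop) [DecidablePred p]
    (g : (Fin N → ℝ) → ℝ) (hg : Continuous g) (hgcs : HasCompactSupport g)
    (F : (Fin N → ℝ) → ℝ) (hF : Continuous F)
    (hFdep : ∀ x y : Fin N → ℝ, (∀ i, ¬ p i → x i = y i) → F x = F y)
    (hzero : ∀ cst : Fin N → ℝ,
      (∫ u : {i : Fin N // p i} → ℝ, g (fun i => if h : p i then u ⟨i, h⟩ else cst i)) = 0) :
    (∫ s, g s * F s) = 0 := by
  set φ := MeasurableEquiv.piEquivPiSubtypeProd (fun _ : Fin N => ℝ) p with hφ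
  have hmp : MeasurePreserving φ := volume_preserving_piEquivPiSubtypeProd _ p
  set G : (Fin N → ℝ) → ℝ := fun s => g s * F s with hG
  have hGcont : Continuous G := hg.mul hF
  have hGcs : HasCompactSupport G := hgcs.mul_right
  have hGint : Integrable G := hGcont.integrable_of_hasCompactSupport hGcs
  have hsymm : ∀ (u : {i : Fin N // p i} → ℝ) (v : {i : Fin N // ¬ p i} → ℝ) (i : Fin N),
      φ.symm (u, v) i = if h : p i then u ⟨i, h⟩ else v ⟨i, Classical.byContradiction fun h' => h (not_not.mp h')⟩ := by
    intro u v i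
    by_cases h : p i <;> simp [hφ, MeasurableEquiv.piEquivPiSubtypeProd, Equiv.piEquivPiSubtypeProd, h]
  have h1 : (∫ s, G s) = ∫ y : ({i : Fin N // p i} → ℝ) × ({i : Fin N // ¬ p i} → ℝ),
      G (φ.symm y) := by
    have := hmp.integral_comp φ.measurableEmbedding (fun y => G (φ.symm y))
    simpa using this
  have h2 : Integrable (fun y : ({i : Fin N // p i} → ℝ) × ({i : Fin N // ¬ p i} → ℝ) =>
      G (φ.symm y)) ((volume : Measure ({i : Fin N // p i} → ℝ)).prod volume) := by
    exact ((hmp.symm φ).integrable_comp_emb φ.symm.measurableEmbedding).mpr hGint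
  have h3 : (∫ y : ({i : Fin N // p i} → ℝ) × ({i : Fin N // ¬ p i} → ℝ), G (φ.symm y))
      = ∫ u, ∫ v, G (φ.symm (u, v)) := integral_prod _ h2
  have h3' : (∫ u, ∫ v, G (φ.symm (u, v))) = ∫ v, ∫ u, G (φ.symm (u, v)) :=
    integral_integral_swap h2
  have h4 : ∀ v : {i : Fin N // ¬ p i} → ℝ, (∫ u, G (φ.symm (u, v))) = 0 := by
    intro v
    set cst : Fin N → ℝ := fun i => if h : p i then 0 else v ⟨i, h⟩ with hcst
    have hmerge : ∀ u, φ.symm (u, v) = fun i => if h : p i then u ⟨i, h⟩ else cst i := by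
      intro u; funext i
      by_cases h : p i <;> simp [hsymm, h, hcst]
    have hFc : ∀ u, F (φ.symm (u, v)) = F cst := by
      intro u
      apply hFdep
      intro i hi
      rw [hmerge]
      simp [hi, hcst]
    have : (∫ u, G (φ.symm (u, v)))
        = (∫ u : {i : Fin N // p i} → ℝ, g (fun i => if h : p i then u ⟨i, h⟩ else cst i)) * F cst := by
      rw [← integral_mul_const]
      refine integral_congr_ae (Filter.Eventually.of_forall fun u => ?_)
      have hFu := hFc u
      rw [hmerge u] at hFu
      rw [hG]
      simp only [hmerge u, hFu]
    rw [this, hzero cst, zero_mul]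
  rw [h1, h3, h3']
  simp only [h4, integral_zero]


lemma aux_intbound {N : ℕ} (g : (Fin N → ℝ) → ℝ) {a D : ℝ}
    (h : ∀ s, s ∈ Metric.closedBall (0 : Fin N → ℝ) a → |g s| ≤ D)
    (h0 : ∀ s, s ∉ Metric.closedBall (0 : Fin N → ℝ) a → g s = 0) :
    |∫ s, g s| ≤ (volume (Metric.closedBall (0 : Fin N → ℝ) a)).toReal * D := by
  have hind : Integrable ((Metric.closedBall (0 : Fin N → ℝ) a).indicator (fun _ => D)) := by
    rw [integrable_indicator_iff measurableSet_closedBall]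
    exact integrableOn_const measure_closedBall_lt_top.ne
  calc |∫ s, g s| = ‖∫ s, g s‖ := (Real.norm_eq_abs _).symm
    _ ≤ ∫ s, (Metric.closedBall (0 : Fin N → ℝ) a).indicator (fun _ => D) s := by
        refine norm_integral_le_of_norm_le hind (Filter.Eventually.of_forall fun s => ?_)
        by_cases hs : s ∈ Metric.closedBall (0 : Fin N → ℝ) a
        · simpa [Set.indicator_of_mem hs, Real.norm_eq_abs] using h s hs
        · simp [Set.indicator_of_notMem hs, h0 s hs]
    _ = (volume (Metric.closedBall (0 : Fin N → ℝ) a)).toReal • D :=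
        integral_indicator_const D measurableSet_closedBall
    _ = (volume (Metric.closedBall (0 : Fin N → ℝ) a)).toReal * D := smul_eq_mul _ _

/-- convergence lemma for the kernel class `K̃(N,e,a,[0,1]^ν)`:
there is `ε > 0` (depending only on `ν` and `e`) so that for every bounded family
`{ς_j}` of C¹ functions supported in `B(a)` satisfying the cancellation conditions,
and every compactly supported Lipschitz `f`,
`|∫ ς_j^{(2^j)} f| ≤ C_f 2^{−ε max_μ j_μ}`; in particular `∑_j ∫ ς_j^{(2^j)} f`
converges absolutely. -/
theorem stmt_11 (ν N : ℕ) (hν : 1 ≤ ν) (hN : 1 ≤ N)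
    (e : Fin N → Fin ν → ℝ) (he0 : ∀ i μ', 0 ≤ e i μ')
    (heμ : ∀ μ' : Fin ν, ∃ i, 0 < e i μ') :
    ∃ ε > (0:ℝ), ∀ a : ℝ, 0 < a →
      ∀ ς : (Fin ν → ℕ) → (Fin N → ℝ) → ℝ,
      (∀ j, ContDiff ℝ 1 (ς j)) →
      (∀ j, Function.support (ς j) ⊆ Metric.ball 0 a) →
      (∃ A : ℝ, ∀ j t, |ς j t| ≤ A ∧ ‖fderiv ℝ (ς j) t‖ ≤ A) →
      (∀ (j : Fin ν → ℕ) (μ : Fin ν), j μ ≠ 0 → ∀ c : Fin N → ℝ,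
        (∫ u : {i : Fin N // e i μ ≠ 0} → ℝ,
          ς j (fun i => if h : e i μ ≠ 0 then u ⟨i, h⟩ else c i)) = 0) →
      ∀ f : (Fin N → ℝ) → ℝ, HasCompactSupport f → (∃ Lf : NNReal, LipschitzWith Lf f) →
      ∃ Cf : ℝ,
        (∀ j : Fin ν → ℕ,
          |∫ t, dilate e (ς j) (fun μ => (j μ : ℝ)) t * f t|
            ≤ Cf * (2 : ℝ) ^ (-(ε * ((Finset.univ.sup j : ℕ) : ℝ)))) ∧
        Summable (fun j : Fin ν → ℕ =>
          |∫ t, dilate e (ς j) (fun μ => (j μ : ℝ)) t * f t|) := by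
  classical
  have hνpos : 0 < ν := hν
  have hNpos : 0 < N := hN
  have hne : (Finset.univ : Finset (Fin N × Fin ν)).Nonempty :=
    ⟨(⟨0, hNpos⟩, ⟨0, hνpos⟩), Finset.mem_univ _⟩
  set ε : ℝ := Finset.univ.inf' hne
    (fun q : Fin N × Fin ν => if 0 < e q.1 q.2 then e q.1 q.2 else 1) with hε
  have hεpos : 0 < ε := by
    rw [hε, Finset.lt_inf'_iff]
    intro q _
    split_ifs with h
    · exact h
    · exact one_pos
  have hεle : ∀ i μ', e i μ' ≠ 0 → ε ≤ e i μ' := by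
    intro i μ' h
    have hpos : 0 < e i μ' := lt_of_le_of_ne (he0 i μ') (Ne.symm h)
    have h2 := Finset.inf'_le
      (f := fun q : Fin N × Fin ν => if 0 < e q.1 q.2 then e q.1 q.2 else 1)
      (Finset.mem_univ (i, μ'))
    rw [if_pos hpos] at h2
    exact le_trans (le_of_eq hε) h2
  refine ⟨ε, hεpos, ?_⟩
  intro a ha ς hς1 hςsupp hAex hcanc f hfcs hLfex
  obtain ⟨A, hA⟩ := hAex
  obtain ⟨Lf, hLf⟩ := hLfex
  have hA0 : 0 ≤ A := le_trans (abs_nonneg _) (hA (fun _ => 0) 0).1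
  have hfc : Continuous f := hLf.continuous
  obtain ⟨B, hB⟩ := hfcs.exists_bound_of_continuous hfc
  have hB0 : 0 ≤ B := le_trans (norm_nonneg (f 0)) (hB 0)
  set V : ℝ := (volume (Metric.closedBall (0 : Fin N → ℝ) a)).toReal with hV
  have hV0 : 0 ≤ V := ENNReal.toReal_nonneg
  have hςcont : ∀ j, Continuous (ς j) := fun j => (hς1 j).continuous
  have hςcs : ∀ j, HasCompactSupport (ς j) := by
    intro j
    apply HasCompactSupport.intro (isCompact_closedBall (0 : Fin N → ℝ) a)
    intro x hx
    by_contra h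
    exact hx (Metric.ball_subset_closedBall (hςsupp j (Function.mem_support.mpr h)))
  have hςzero : ∀ j s, s ∉ Metric.closedBall (0 : Fin N → ℝ) a → ς j s = 0 := by
    intro j s hs
    by_contra h
    exact hs (Metric.ball_subset_closedBall (hςsupp j (Function.mem_support.mpr h)))
  -- change of variables
  have hcov : ∀ j : Fin ν → ℕ,
      (∫ t, dilate e (ς j) (fun μ => (j μ : ℝ)) t * f t)
        = ∫ s, ς j s * f (fun i => (2:ℝ) ^ (-(∑ μ, ((j μ : ℝ)) * e i μ)) * s i) :=
    fun j => aux_cov (ς j) (hςcont j) (hςcs j) f hfc (fun i => ∑ μ, ((j μ : ℝ)) * e i μ)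
  set Cf : ℝ := (A * max B ((Lf : ℝ) * a)) * V with hCf
  have hCf0 : 0 ≤ Cf :=
    mul_nonneg (mul_nonneg hA0 (le_trans hB0 (le_max_left _ _))) hV0
  have hbound : ∀ j : Fin ν → ℕ,
      |∫ t, dilate e (ς j) (fun μ => (j μ : ℝ)) t * f t|
        ≤ Cf * (2 : ℝ) ^ (-(ε * ((Finset.univ.sup j : ℕ) : ℝ))) := by
    intro j
    set M : ℕ := Finset.univ.sup j with hM
    rcases Nat.eq_zero_or_pos M with hM0 | hM1
    · -- trivial uniform bound
      rw [hM0]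
      simp only [Nat.cast_zero, mul_zero, neg_zero, Real.rpow_zero, mul_one]
      have key : |∫ t, dilate e (ς j) (fun μ => (j μ : ℝ)) t * f t| ≤ V * (A * B) := by
        rw [hcov j, hV]
        refine aux_intbound _ (fun s _ => ?_) (fun s hs => by simp [hςzero j s hs])
        rw [abs_mul]
        refine mul_le_mul (hA j s).1 ?_ (abs_nonneg _) hA0
        simpa [Real.norm_eq_abs] using hB _
      calc |∫ t, dilate e (ς j) (fun μ => (j μ : ℝ)) t * f t| ≤ V * (A * B) := key
        _ ≤ Cf := by
            rw [hCf]
            have hh : B ≤ max B ((Lf : ℝ) * a) := le_max_left _ _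
            calc V * (A * B) = (A * B) * V := by ring
              _ ≤ (A * max B ((Lf : ℝ) * a)) * V :=
                  mul_le_mul_of_nonneg_right (mul_le_mul_of_nonneg_left hh hA0) hV0
    · -- main case
      obtain ⟨μ, -, hμ⟩ := Finset.exists_mem_eq_sup Finset.univ
        (⟨⟨0, hνpos⟩, Finset.mem_univ _⟩) j
      have hjμ : j μ ≠ 0 := by
        rw [hM, hμ] at hM1
        omega
      set w : (Fin N → ℝ) → (Fin N → ℝ) := fun s =>
        fun i => if e i μ = 0 then (2:ℝ) ^ (-(∑ μ', ((j μ' : ℝ)) * e i μ')) * s i else 0 with hw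
      set F : (Fin N → ℝ) → ℝ := fun s => f (w s) with hF
      have hwcont : Continuous w := by
        apply continuous_pi
        intro i
        have hwi : (fun s : Fin N → ℝ => w s i)
            = (fun s : Fin N → ℝ => if e i μ = 0 then
                (2:ℝ) ^ (-(∑ μ', ((j μ' : ℝ)) * e i μ')) * s i else 0) := rfl
        rw [hwi]
        by_cases h : e i μ = 0
        · simp only [if_pos h]
          exact continuous_const.mul (continuous_apply i)
        · simp only [if_neg h]
          exact continuous_const
      have hFcont : Continuous F := hfc.comp hwcont
      have hFdep : ∀ x y : Fin N → ℝ, (∀ i, ¬ (e i μ ≠ 0) → x i = y i) → F x = F y := by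
        intro x y hxy
        refine congrArg f (funext fun i => ?_)
        have hx : w x i = (if e i μ = 0 then
            (2:ℝ) ^ (-(∑ μ', ((j μ' : ℝ)) * e i μ')) * x i else 0) := rfl
        have hy : w y i = (if e i μ = 0 then
            (2:ℝ) ^ (-(∑ μ', ((j μ' : ℝ)) * e i μ')) * y i else 0) := rfl
        rw [hx, hy]
        by_cases h : e i μ = 0
        · rw [if_pos h, if_pos h, hxy i (not_not_intro h)]
        · rw [if_neg h, if_neg h]
      have hzero : (∫ s, ς j s * F s) = 0 :=
        aux_cancel (fun i => e i μ ≠ 0) (ς j) (hςcont j) (hςcs j) F hFcont hFdep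
          (hcanc j μ hjμ)
      set T : (Fin N → ℝ) → (Fin N → ℝ) := fun s =>
        fun i => (2:ℝ) ^ (-(∑ μ', ((j μ' : ℝ)) * e i μ')) * s i with hT
      have hTcont : Continuous T :=
        continuous_pi fun i => continuous_const.mul (continuous_apply i)
      have hintT : Integrable (fun s => ς j s * f (T s)) :=
        ((hςcont j).mul (hfc.comp hTcont)).integrable_of_hasCompactSupport (hςcs j).mul_right
      have hintF : Integrable (fun s => ς j s * F s) :=
        ((hςcont j).mul hFcont).integrable_of_hasCompactSupport (hςcs j).mul_right
      have hcov' : (∫ t, dilate e (ς j) (fun μ => (j μ : ℝ)) t * f t)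
          = ∫ s, ς j s * f (T s) := hcov j
      have hdiff : (∫ t, dilate e (ς j) (fun μ => (j μ : ℝ)) t * f t)
          = ∫ s, ς j s * (f (T s) - F s) := by
        rw [hcov', ← sub_zero (∫ s, ς j s * f (T s)), ← hzero]
        rw [← integral_sub hintT hintF]
        refine integral_congr_ae (Filter.Eventually.of_forall fun s => ?_)
        ring
      set D : ℝ := A * ((Lf : ℝ) * ((2:ℝ) ^ (-(ε * (M : ℝ))) * a)) with hD
      have hrp0 : (0:ℝ) < (2:ℝ) ^ (-(ε * (M : ℝ))) := Real.rpow_pos_of_pos two_pos _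
      have hD0 : 0 ≤ D := by positivity
      have key : |∫ t, dilate e (ς j) (fun μ => (j μ : ℝ)) t * f t| ≤ V * D := by
        rw [hdiff, hV]
        refine aux_intbound _ (fun s _ => ?_) (fun s hs => by simp [hςzero j s hs])
        by_cases hs0 : ς j s = 0
        · simp [hs0, hD0]
        · have hsball : s ∈ Metric.ball (0 : Fin N → ℝ) a :=
            hςsupp j (Function.mem_support.mpr hs0)
          have hsn : ‖s‖ < a := by simpa using mem_ball_zero_iff.mp hsball
          rw [abs_mul]
          refine mul_le_mul (hA j s).1 ?_ (abs_nonneg _) hA0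
          -- Lipschitz estimate
          have hlip : |f (T s) - F s| ≤ (Lf : ℝ) * ‖T s - w s‖ := by
            have h1 : F s = f (w s) := rfl
            rw [h1]
            calc |f (T s) - f (w s)| = dist (f (T s)) (f (w s)) := (Real.dist_eq _ _).symm
              _ ≤ (Lf : ℝ) * dist (T s) (w s) := hLf.dist_le_mul _ _
              _ = (Lf : ℝ) * ‖T s - w s‖ := by rw [dist_eq_norm]
          have hnorm : ‖T s - w s‖ ≤ (2:ℝ) ^ (-(ε * (M : ℝ))) * a := by
            rw [pi_norm_le_iff_of_nonneg (by positivity)]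
            intro i
            by_cases h : e i μ = 0
            · have hTi : (T s - w s) i = 0 := by
                have : (T s - w s) i = (2:ℝ) ^ (-(∑ μ', ((j μ' : ℝ)) * e i μ')) * s i
                    - (if e i μ = 0 then (2:ℝ) ^ (-(∑ μ', ((j μ' : ℝ)) * e i μ')) * s i else 0) := rfl
                rw [this, if_pos h, sub_self]
              rw [hTi]
              simpa using (by positivity : (0:ℝ) ≤ (2:ℝ) ^ (-(ε * (M : ℝ))) * a)
            · have hTi : (T s - w s) i = (2:ℝ) ^ (-(∑ μ', ((j μ' : ℝ)) * e i μ')) * s i := by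
                have : (T s - w s) i = (2:ℝ) ^ (-(∑ μ', ((j μ' : ℝ)) * e i μ')) * s i
                    - (if e i μ = 0 then (2:ℝ) ^ (-(∑ μ', ((j μ' : ℝ)) * e i μ')) * s i else 0) := rfl
                rw [this, if_neg h, sub_zero]
              rw [hTi, Real.norm_eq_abs, abs_mul,
                abs_of_pos (Real.rpow_pos_of_pos two_pos _)]
              have hexp : ε * (M : ℝ) ≤ ∑ μ', ((j μ' : ℝ)) * e i μ' := by
                have h1 : ((j μ : ℝ)) * e i μ ≤ ∑ μ', ((j μ' : ℝ)) * e i μ' :=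
                  Finset.single_le_sum (f := fun μ' => ((j μ' : ℝ)) * e i μ')
                    (fun μ' _ => mul_nonneg (Nat.cast_nonneg _) (he0 i μ'))
                    (Finset.mem_univ μ)
                have h2 : ε * (M : ℝ) ≤ ((j μ : ℝ)) * e i μ := by
                  have hMj : (M : ℝ) = (j μ : ℝ) := by rw [hM, hμ]
                  rw [hMj, mul_comm]
                  exact mul_le_mul_of_nonneg_left (hεle i μ h) (Nat.cast_nonneg _)
                linarith
              have hr : (2:ℝ) ^ (-(∑ μ', ((j μ' : ℝ)) * e i μ')) ≤ (2:ℝ) ^ (-(ε * (M : ℝ))) :=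
                Real.rpow_le_rpow_of_exponent_le one_le_two (by linarith)
              have hsi : |s i| ≤ a := le_of_lt (lt_of_le_of_lt (norm_le_pi_norm s i) hsn)
              exact mul_le_mul hr hsi (abs_nonneg _) hrp0.le
          calc |f (T s) - F s| ≤ (Lf : ℝ) * ‖T s - w s‖ := hlip
            _ ≤ (Lf : ℝ) * ((2:ℝ) ^ (-(ε * (M : ℝ))) * a) :=
                mul_le_mul_of_nonneg_left hnorm Lf.coe_nonneg
      calc |∫ t, dilate e (ς j) (fun μ => (j μ : ℝ)) t * f t| ≤ V * D := key
        _ = ((A * ((Lf : ℝ) * a)) * V) * (2:ℝ) ^ (-(ε * (M : ℝ))) := by rw [hD]; ring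
        _ ≤ Cf * (2:ℝ) ^ (-(ε * (M : ℝ))) := by
            rw [hCf]
            have h1 : (Lf : ℝ) * a ≤ max B ((Lf : ℝ) * a) := le_max_right _ _
            have h2 : (A * ((Lf : ℝ) * a)) * V ≤ (A * max B ((Lf : ℝ) * a)) * V :=
              mul_le_mul_of_nonneg_right (mul_le_mul_of_nonneg_left h1 hA0) hV0
            exact mul_le_mul_of_nonneg_right h2 hrp0.le
  refine ⟨Cf, hbound, ?_⟩
  -- summability
  set r : ℝ := (2:ℝ) ^ (-(ε / (ν : ℝ))) with hr
  have hr0 : 0 ≤ r := (Real.rpow_pos_of_pos two_pos _).le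
  have hr1 : r < 1 := by
    rw [hr]
    apply Real.rpow_lt_one_of_one_lt_of_neg one_lt_two
    have : 0 < ε / (ν : ℝ) := div_pos hεpos (by exact_mod_cast hνpos)
    linarith
  have hsum := (aux_summable_pi ν hr0 hr1).mul_left Cf
  refine Summable.of_nonneg_of_le (fun j => abs_nonneg _) (fun j => ?_) hsum
  calc |∫ t, dilate e (ς j) (fun μ => (j μ : ℝ)) t * f t|
      ≤ Cf * (2 : ℝ) ^ (-(ε * ((Finset.univ.sup j : ℕ) : ℝ))) := hbound j
    _ ≤ Cf * ∏ μ, r ^ j μ := by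
        refine mul_le_mul_of_nonneg_left ?_ hCf0
        have h1 : (∏ μ, r ^ j μ) = (2:ℝ) ^ (∑ μ, (-(ε / (ν : ℝ))) * (j μ : ℝ)) := by
          rw [Real.rpow_sum_of_pos two_pos]
          refine Finset.prod_congr rfl fun μ _ => ?_
          rw [Real.rpow_mul two_pos.le, Real.rpow_natCast, hr]
        rw [h1]
        apply Real.rpow_le_rpow_of_exponent_le one_le_two
        have hsumle : (∑ μ, ((j μ : ℝ))) ≤ (ν : ℝ) * ((Finset.univ.sup j : ℕ) : ℝ) := by
          have h2 : (∑ μ, j μ) ≤ Finset.univ.card • (Finset.univ.sup j) :=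
            Finset.sum_le_card_nsmul _ _ _ (fun μ _ => Finset.le_sup (Finset.mem_univ μ))
          have h3 : (Finset.univ : Finset (Fin ν)).card = ν := by simp
          rw [h3, smul_eq_mul] at h2
          exact_mod_cast h2
        have heq : (∑ μ, (-(ε / (ν : ℝ))) * (j μ : ℝ))
            = -((ε / (ν : ℝ)) * ∑ μ, ((j μ : ℝ))) := by
          rw [Finset.mul_sum]
          simp [neg_mul]
        rw [heq]
        have h4 : (ε / (ν : ℝ)) * (∑ μ, ((j μ : ℝ)))
            ≤ (ε / (ν : ℝ)) * ((ν : ℝ) * ((Finset.univ.sup j : ℕ) : ℝ)) :=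
          mul_le_mul_of_nonneg_left hsumle (by positivity)
        have h5 : (ε / (ν : ℝ)) * ((ν : ℝ) * ((Finset.univ.sup j : ℕ) : ℝ))
            = ε * ((Finset.univ.sup j : ℕ) : ℝ) := by
          field_simp
        linarith
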